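/- Define F(t,r) = (1 + r cos t)/(r² + 4r cos t + 4)^{3/2} + (1 − r cos t)/(r² − 4r cos t + 4)^{3/2}, which is continuous and π-periodic in t for each r ∈ (0,2). If 0 < r ≤ (√17 − 3)^{1/2}, then the normalized fundamental solutions x₁, x₂ of the linear equation ẍ − F(t,r)x = 0 satisfy x₁(π) + x₂'(π) > 2; consequently the Floquet multipliers are real, positive and distinct, with one greater than 1, i.e. the equilibrium (π, 0) of the curved Sitnikov problem with ε = 0 is of hyperbolic type (in particular the zero solution is unstable). -/
import Mathlib

open Set

/-- The coefficient of the linearization of the curved Sitnikov problem (with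
circular primaries, `ε = 0`, `R = 1`) at the equilibrium `q = π`. -/
noncomputable def F (t r : ℝ) : ℝ :=
  (1 + r * Real.cos t) / (r ^ 2 + 4 * r * Real.cos t + 4) ^ ((3 : ℝ) / 2) +
    (1 - r * Real.cos t) / (r ^ 2 - 4 * r * Real.cos t + 4) ^ ((3 : ℝ) / 2)

/-- Auxiliary cross-multiplied inequality. -/
lemma sitnikov_cross (r s : ℝ) (h1 : 1 ≤ s) (hs : s ≤ r) (hr4 : r ^ 4 + 6 * r ^ 2 ≤ 8) :
    (s - 1) * (r ^ 2 + 4 * s + 4) ^ ((3 : ℝ) / 2) ≤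
      (s + 1) * (r ^ 2 - 4 * s + 4) ^ ((3 : ℝ) / 2) := by
  have hr2 : r < 2 := by nlinarith
  have hA : (0 : ℝ) < r ^ 2 + 4 * s + 4 := by nlinarith
  have hB : (0 : ℝ) < r ^ 2 - 4 * s + 4 := by nlinarith
  have hsq : ∀ X : ℝ, 0 ≤ X → (X ^ ((3 : ℝ) / 2)) ^ 2 = X ^ 3 := by
    intro X hX
    rw [← Real.rpow_natCast (X ^ ((3 : ℝ) / 2)) 2, ← Real.rpow_mul hX,
      ← Real.rpow_natCast X 3]
    norm_num
  have hRnn : 0 ≤ (s + 1) * (r ^ 2 - 4 * s + 4) ^ ((3 : ℝ) / 2) :=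
    mul_nonneg (by linarith) (Real.rpow_nonneg hB.le _)
  have hpoly : (s - 1) ^ 2 * (r ^ 2 + 4 * s + 4) ^ 3 ≤
      (s + 1) ^ 2 * (r ^ 2 - 4 * s + 4) ^ 3 := by
    have hs2 : s ^ 2 ≤ r ^ 2 := by nlinarith
    have hs0 : (0 : ℝ) ≤ s := by linarith
    have h54 : (0 : ℝ) ≤ 5 * r ^ 2 - 4 := by nlinarith
    have hX : 0 ≤ s * ((5 * r ^ 2 - 4) * (8 - 6 * r ^ 2 - r ^ 4)) :=
      mul_nonneg hs0 (mul_nonneg h54 (by nlinarith))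
    have hY : 0 ≤ s * ((r ^ 2 - s ^ 2) * (6 * r ^ 4 + 32 * (s ^ 2 - 1) + 32 * (r ^ 2 - 1))) :=
      mul_nonneg hs0 (mul_nonneg (by linarith) (by nlinarith))
    nlinarith [hX, hY]
  have h2 : ((s - 1) * (r ^ 2 + 4 * s + 4) ^ ((3 : ℝ) / 2)) ^ 2 ≤
      ((s + 1) * (r ^ 2 - 4 * s + 4) ^ ((3 : ℝ) / 2)) ^ 2 := by
    rw [mul_pow, mul_pow, hsq _ hA.le, hsq _ hB.le]
    exact hpoly
  exact le_of_pow_le_pow_left₀ two_ne_zero hRnn h2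

/-- `F` is nonnegative everywhere when `r⁴ + 6r² ≤ 8`. -/
lemma sitnikov_F_nonneg (r : ℝ) (hr0 : 0 < r) (hr4 : r ^ 4 + 6 * r ^ 2 ≤ 8) (t : ℝ) :
    0 ≤ F t r := by
  have hr2 : r < 2 := by nlinarith
  unfold F
  set c := Real.cos t with hc_def
  have hcabs : |c| ≤ 1 := Real.abs_cos_le_one t
  have hc1 : -1 ≤ c := (abs_le.mp hcabs).1
  have hc2 : c ≤ 1 := (abs_le.mp hcabs).2
  have hsle : r * c ≤ r := by nlinarith
  have hsge : -r ≤ r * c := by nlinarith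
  have hA : (0 : ℝ) < r ^ 2 + 4 * r * c + 4 := by nlinarith
  have hB : (0 : ℝ) < r ^ 2 - 4 * r * c + 4 := by nlinarith
  have hApow : (0 : ℝ) < (r ^ 2 + 4 * r * c + 4) ^ ((3 : ℝ) / 2) := Real.rpow_pos_of_pos hA _
  have hBpow : (0 : ℝ) < (r ^ 2 - 4 * r * c + 4) ^ ((3 : ℝ) / 2) := Real.rpow_pos_of_pos hB _
  rcases le_or_gt (r * c) 1 with hs1 | hs1
  · rcases le_or_gt (-1) (r * c) with hsm1 | hsm1
    · have h1 : 0 ≤ (1 + r * c) / (r ^ 2 + 4 * r * c + 4) ^ ((3 : ℝ) / 2) :=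
        div_nonneg (by linarith) hApow.le
      have h2 : 0 ≤ (1 - r * c) / (r ^ 2 - 4 * r * c + 4) ^ ((3 : ℝ) / 2) :=
        div_nonneg (by linarith) hBpow.le
      linarith
    · -- r*c < -1 : apply cross to -(r*c)
      have key := sitnikov_cross r (-(r * c)) (by linarith) (by linarith) hr4
      rw [show r ^ 2 + 4 * -(r * c) + 4 = r ^ 2 - 4 * r * c + 4 by ring,
        show r ^ 2 - 4 * -(r * c) + 4 = r ^ 2 + 4 * r * c + 4 by ring] at key
      have hgoal : (-(1 + r * c)) / (r ^ 2 + 4 * r * c + 4) ^ ((3 : ℝ) / 2) ≤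
          (1 - r * c) / (r ^ 2 - 4 * r * c + 4) ^ ((3 : ℝ) / 2) := by
        rw [div_le_div_iff₀ hApow hBpow]
        nlinarith [key]
      have hneg : (-(1 + r * c)) / (r ^ 2 + 4 * r * c + 4) ^ ((3 : ℝ) / 2) =
          -((1 + r * c) / (r ^ 2 + 4 * r * c + 4) ^ ((3 : ℝ) / 2)) := neg_div _ _
      linarith [hgoal, hneg]
  · -- 1 < r*c
    have key := sitnikov_cross r (r * c) hs1.le hsle hr4
    rw [show r ^ 2 + 4 * (r * c) + 4 = r ^ 2 + 4 * r * c + 4 by ring,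
      show r ^ 2 - 4 * (r * c) + 4 = r ^ 2 - 4 * r * c + 4 by ring] at key
    have hgoal : (-(1 - r * c)) / (r ^ 2 - 4 * r * c + 4) ^ ((3 : ℝ) / 2) ≤
        (1 + r * c) / (r ^ 2 + 4 * r * c + 4) ^ ((3 : ℝ) / 2) := by
      rw [div_le_div_iff₀ hBpow hApow]
      nlinarith [key]
    have hneg : (-(1 - r * c)) / (r ^ 2 - 4 * r * c + 4) ^ ((3 : ℝ) / 2) =
        -((1 - r * c) / (r ^ 2 - 4 * r * c + 4) ^ ((3 : ℝ) / 2)) := neg_div _ _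
    linarith [hgoal, hneg]

/-- `F` is strictly positive when `|cos t| < 1/r` (here: `r|cos t| < 1`). -/
lemma sitnikov_F_pos (r t : ℝ) (hr0 : 0 < r) (hr2 : r < 2) (h : |r * Real.cos t| < 1) :
    0 < F t r := by
  unfold F
  have hc1 := (abs_lt.mp h).1
  have hc2 := (abs_lt.mp h).2
  have hcabs : |Real.cos t| ≤ 1 := Real.abs_cos_le_one t
  have hc1' : -1 ≤ Real.cos t := (abs_le.mp hcabs).1
  have hc2' : Real.cos t ≤ 1 := (abs_le.mp hcabs).2
  have hA : (0 : ℝ) < r ^ 2 + 4 * r * Real.cos t + 4 := by nlinarith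
  have hB : (0 : ℝ) < r ^ 2 - 4 * r * Real.cos t + 4 := by nlinarith
  have h1 : 0 < (1 + r * Real.cos t) / (r ^ 2 + 4 * r * Real.cos t + 4) ^ ((3 : ℝ) / 2) :=
    div_pos (by linarith) (Real.rpow_pos_of_pos hA _)
  have h2 : 0 < (1 - r * Real.cos t) / (r ^ 2 - 4 * r * Real.cos t + 4) ^ ((3 : ℝ) / 2) :=
    div_pos (by linarith) (Real.rpow_pos_of_pos hB _)
  linarith

/-- ODE comparison for an `x₁`-type solution: `x ≥ 1`, `v ≥ 0`, and `v` monotone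
on `[0, T]`, provided the coefficient is nonnegative. -/
lemma sitnikov_sol_one (g x v : ℝ → ℝ)
    (hx : ∀ t, HasDerivAt x (v t) t) (hv : ∀ t, HasDerivAt v (g t * x t) t)
    (hg : ∀ t, 0 ≤ g t) (hx0 : x 0 = 1) (hv0 : v 0 = 0) (T : ℝ) (hT : 0 ≤ T) :
    (∀ t ∈ Icc (0 : ℝ) T, 1 ≤ x t ∧ 0 ≤ v t) ∧ MonotoneOn v (Icc (0 : ℝ) T) := by
  have hxc : Continuous x := by
    refine continuous_iff_continuousAt.mpr fun t => (hx t).continuousAt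
  have hvc : Continuous v := by
    refine continuous_iff_continuousAt.mpr fun t => (hv t).continuousAt
  -- Step 1: x > 1/2 on [0, T]
  have hhalf : ∀ t ∈ Icc (0 : ℝ) T, 1 / 2 < x t := by
    by_contra hcon
    push_neg at hcon
    obtain ⟨τ, hτmem, hτ⟩ := hcon
    set C : Set ℝ := Icc 0 T ∩ {t | x t ≤ 1 / 2} with hC_def
    have hCne : C.Nonempty := ⟨τ, hτmem, hτ⟩
    have hCclosed : IsClosed C := isClosed_Icc.inter (isClosed_le hxc continuous_const)
    have hCbdd : BddBelow C := ⟨0, fun u hu => hu.1.1⟩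
    set t₀ := sInf C with ht₀_def
    have ht₀mem : t₀ ∈ C := hCclosed.csInf_mem hCne hCbdd
    have ht₀0 : 0 < t₀ := by
      rcases lt_or_eq_of_le ht₀mem.1.1 with h | h
      · exact h
      · exfalso
        have hle : x t₀ ≤ 1 / 2 := ht₀mem.2
        rw [← h, hx0] at hle; norm_num at hle
    have hbefore : ∀ u, 0 ≤ u → u < t₀ → 1 / 2 < x u := by
      intro u hu0 hut
      by_contra hxu
      push_neg at hxu
      have huC : u ∈ C := ⟨⟨hu0, hut.le.trans ht₀mem.1.2⟩, hxu⟩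
      exact absurd (csInf_le hCbdd huC) (not_le.mpr hut)
    have hvmono : MonotoneOn v (Icc 0 t₀) := by
      apply monotoneOn_of_deriv_nonneg (convex_Icc _ _) hvc.continuousOn
        (fun u _ => (hv u).differentiableAt.differentiableWithinAt)
      intro u hu
      rw [interior_Icc] at hu
      rw [(hv u).deriv]
      exact mul_nonneg (hg u) (by linarith [hbefore u hu.1.le hu.2])
    have hvpos : ∀ u ∈ Icc (0 : ℝ) t₀, 0 ≤ v u := by
      intro u hu
      have := hvmono (left_mem_Icc.mpr ht₀0.le) hu hu.1
      rw [hv0] at this; exact this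
    have hxmono : MonotoneOn x (Icc 0 t₀) := by
      apply monotoneOn_of_deriv_nonneg (convex_Icc _ _) hxc.continuousOn
        (fun u _ => (hx u).differentiableAt.differentiableWithinAt)
      intro u hu
      rw [interior_Icc] at hu
      rw [(hx u).deriv]
      exact hvpos u ⟨hu.1.le, hu.2.le⟩
    have h1 : (1 : ℝ) ≤ x t₀ := by
      have := hxmono (left_mem_Icc.mpr ht₀0.le) (right_mem_Icc.mpr ht₀0.le) ht₀0.le
      rw [hx0] at this; exact this
    have hle : x t₀ ≤ 1 / 2 := ht₀mem.2
    linarith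
  -- Step 2: from x > 1/2, v is monotone on [0, T], hence v ≥ 0, hence x monotone, x ≥ 1.
  have hvmono : MonotoneOn v (Icc 0 T) := by
    apply monotoneOn_of_deriv_nonneg (convex_Icc _ _) hvc.continuousOn
      (fun u _ => (hv u).differentiableAt.differentiableWithinAt)
    intro u hu
    rw [interior_Icc] at hu
    rw [(hv u).deriv]
    exact mul_nonneg (hg u) (by linarith [hhalf u ⟨hu.1.le, hu.2.le⟩])
  have hvpos : ∀ u ∈ Icc (0 : ℝ) T, 0 ≤ v u := by
    intro u hu
    have := hvmono (left_mem_Icc.mpr hT) hu hu.1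
    rw [hv0] at this; exact this
  have hxmono : MonotoneOn x (Icc 0 T) := by
    apply monotoneOn_of_deriv_nonneg (convex_Icc _ _) hxc.continuousOn
      (fun u _ => (hx u).differentiableAt.differentiableWithinAt)
    intro u hu
    rw [interior_Icc] at hu
    rw [(hx u).deriv]
    exact hvpos u ⟨hu.1.le, hu.2.le⟩
  refine ⟨fun t ht => ⟨?_, hvpos t ht⟩, hvmono⟩
  have := hxmono (left_mem_Icc.mpr hT) ht ht.1
  rw [hx0] at this; exact this

/-- ODE comparison for an `x₂`-type solution: `x ≥ 0` and `v ≥ 1` on `[0, T]`. -/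
lemma sitnikov_sol_two (g x v : ℝ → ℝ)
    (hx : ∀ t, HasDerivAt x (v t) t) (hv : ∀ t, HasDerivAt v (g t * x t) t)
    (hg : ∀ t, 0 ≤ g t) (hx0 : x 0 = 0) (hv0 : v 0 = 1) (T : ℝ) (hT : 0 ≤ T) :
    ∀ t ∈ Icc (0 : ℝ) T, 0 ≤ x t ∧ 1 ≤ v t := by
  have hxc : Continuous x := by
    refine continuous_iff_continuousAt.mpr fun t => (hx t).continuousAt
  have hvc : Continuous v := by
    refine continuous_iff_continuousAt.mpr fun t => (hv t).continuousAt
  -- Step 1: v > 1/2 on [0, T]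
  have hhalf : ∀ t ∈ Icc (0 : ℝ) T, 1 / 2 < v t := by
    by_contra hcon
    push_neg at hcon
    obtain ⟨τ, hτmem, hτ⟩ := hcon
    set C : Set ℝ := Icc 0 T ∩ {t | v t ≤ 1 / 2} with hC_def
    have hCne : C.Nonempty := ⟨τ, hτmem, hτ⟩
    have hCclosed : IsClosed C := isClosed_Icc.inter (isClosed_le hvc continuous_const)
    have hCbdd : BddBelow C := ⟨0, fun u hu => hu.1.1⟩
    set t₀ := sInf C with ht₀_def
    have ht₀mem : t₀ ∈ C := hCclosed.csInf_mem hCne hCbdd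
    have ht₀0 : 0 < t₀ := by
      rcases lt_or_eq_of_le ht₀mem.1.1 with h | h
      · exact h
      · exfalso
        have hle : v t₀ ≤ 1 / 2 := ht₀mem.2
        rw [← h, hv0] at hle; norm_num at hle
    have hbefore : ∀ u, 0 ≤ u → u < t₀ → 1 / 2 < v u := by
      intro u hu0 hut
      by_contra hvu
      push_neg at hvu
      have huC : u ∈ C := ⟨⟨hu0, hut.le.trans ht₀mem.1.2⟩, hvu⟩
      exact absurd (csInf_le hCbdd huC) (not_le.mpr hut)
    have hxmono : MonotoneOn x (Icc 0 t₀) := by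
      apply monotoneOn_of_deriv_nonneg (convex_Icc _ _) hxc.continuousOn
        (fun u _ => (hx u).differentiableAt.differentiableWithinAt)
      intro u hu
      rw [interior_Icc] at hu
      rw [(hx u).deriv]
      linarith [hbefore u hu.1.le hu.2]
    have hxpos : ∀ u ∈ Icc (0 : ℝ) t₀, 0 ≤ x u := by
      intro u hu
      have := hxmono (left_mem_Icc.mpr ht₀0.le) hu hu.1
      rw [hx0] at this; exact this
    have hvmono : MonotoneOn v (Icc 0 t₀) := by
      apply monotoneOn_of_deriv_nonneg (convex_Icc _ _) hvc.continuousOn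
        (fun u _ => (hv u).differentiableAt.differentiableWithinAt)
      intro u hu
      rw [interior_Icc] at hu
      rw [(hv u).deriv]
      exact mul_nonneg (hg u) (hxpos u ⟨hu.1.le, hu.2.le⟩)
    have h1 : (1 : ℝ) ≤ v t₀ := by
      have := hvmono (left_mem_Icc.mpr ht₀0.le) (right_mem_Icc.mpr ht₀0.le) ht₀0.le
      rw [hv0] at this; exact this
    have hle : v t₀ ≤ 1 / 2 := ht₀mem.2
    linarith
  -- Step 2: conclude
  have hxmono : MonotoneOn x (Icc 0 T) := by
    apply monotoneOn_of_deriv_nonneg (convex_Icc _ _) hxc.continuousOn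
      (fun u _ => (hx u).differentiableAt.differentiableWithinAt)
    intro u hu
    rw [interior_Icc] at hu
    rw [(hx u).deriv]
    linarith [hhalf u ⟨hu.1.le, hu.2.le⟩]
  have hxpos : ∀ u ∈ Icc (0 : ℝ) T, 0 ≤ x u := by
    intro u hu
    have := hxmono (left_mem_Icc.mpr hT) hu hu.1
    rw [hx0] at this; exact this
  have hvmono : MonotoneOn v (Icc 0 T) := by
    apply monotoneOn_of_deriv_nonneg (convex_Icc _ _) hvc.continuousOn
      (fun u _ => (hv u).differentiableAt.differentiableWithinAt)
    intro u hu
    rw [interior_Icc] at hu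
    rw [(hv u).deriv]
    exact mul_nonneg (hg u) (hxpos u ⟨hu.1.le, hu.2.le⟩)
  intro t ht
  refine ⟨hxpos t ht, ?_⟩
  have := hvmono (left_mem_Icc.mpr hT) ht ht.1
  rw [hv0] at this; exact this

/-- Proposition 4.2: for `0 < r ≤ (√17 - 3)^{1/2}`, the normalized
fundamental solutions `x₁, x₂` (with derivatives `v₁, v₂`) of `ẍ - F(t,r)x = 0`
satisfy `x₁(π) + x₂'(π) > 2`; consequently the Floquet multipliers
`(tr ± √(tr² - 4))/2` are real, positive and distinct with the larger one `> 1`: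
the equilibrium `(π,0)` is of hyperbolic type (unstable). -/
theorem equilibrium_pi_hyperbolic (r : ℝ) (hr0 : 0 < r)
    (hr : r ≤ Real.sqrt (Real.sqrt 17 - 3))
    (x₁ v₁ x₂ v₂ : ℝ → ℝ)
    (hx₁ : ∀ t, HasDerivAt x₁ (v₁ t) t) (hv₁ : ∀ t, HasDerivAt v₁ (F t r * x₁ t) t)
    (hx₁0 : x₁ 0 = 1) (hv₁0 : v₁ 0 = 0)
    (hx₂ : ∀ t, HasDerivAt x₂ (v₂ t) t) (hv₂ : ∀ t, HasDerivAt v₂ (F t r * x₂ t) t)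
    (hx₂0 : x₂ 0 = 0) (hv₂0 : v₂ 0 = 1) :
    2 < x₁ Real.pi + v₂ Real.pi ∧
    (0 < (x₁ Real.pi + v₂ Real.pi - Real.sqrt ((x₁ Real.pi + v₂ Real.pi) ^ 2 - 4)) / 2 ∧
      (x₁ Real.pi + v₂ Real.pi - Real.sqrt ((x₁ Real.pi + v₂ Real.pi) ^ 2 - 4)) / 2 <
        (x₁ Real.pi + v₂ Real.pi + Real.sqrt ((x₁ Real.pi + v₂ Real.pi) ^ 2 - 4)) / 2 ∧
      1 < (x₁ Real.pi + v₂ Real.pi + Real.sqrt ((x₁ Real.pi + v₂ Real.pi) ^ 2 - 4)) / 2) := by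
  -- basic bounds on r
  have h17 : Real.sqrt 17 ^ 2 = 17 := Real.sq_sqrt (by norm_num)
  have h17a : (3 : ℝ) ≤ Real.sqrt 17 := by nlinarith [Real.sqrt_nonneg 17]
  have hrsq : r ^ 2 ≤ Real.sqrt 17 - 3 := by
    have h := pow_le_pow_left₀ hr0.le hr 2
    rwa [Real.sq_sqrt (by linarith : (0:ℝ) ≤ Real.sqrt 17 - 3)] at h
  have hr4 : r ^ 4 + 6 * r ^ 2 ≤ 8 := by nlinarith [sq_nonneg r]
  have hr2 : r < 2 := by nlinarith
  have hF : ∀ t, 0 ≤ F t r := sitnikov_F_nonneg r hr0 hr4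
  have hpi : (3 : ℝ) < Real.pi := Real.pi_gt_three
  have hpi0 : (0 : ℝ) ≤ Real.pi := by linarith
  -- the two solutions
  obtain ⟨h1, hv1mono⟩ := sitnikov_sol_one (fun t => F t r) x₁ v₁ hx₁ hv₁ hF hx₁0 hv₁0
    Real.pi hpi0
  have h2 := sitnikov_sol_two (fun t => F t r) x₂ v₂ hx₂ hv₂ hF hx₂0 hv₂0 Real.pi hpi0
  -- F > 0 on [π/2, π/2 + 1/2]
  set a := Real.pi / 2 with ha_def
  set b := Real.pi / 2 + 1 / 2 with hb_def
  have hab : a < b := by rw [ha_def, hb_def]; linarith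
  have hbpi : b ≤ Real.pi := by rw [hb_def]; linarith
  have ha0 : 0 ≤ a := by rw [ha_def]; linarith
  have hFpos : ∀ u ∈ Icc a b, 0 < F u r := by
    intro u hu
    apply sitnikov_F_pos r u hr0 hr2
    have hcos : |Real.cos u| ≤ 1 / 2 := by
      have : Real.cos u = Real.sin (Real.pi / 2 - u) := (Real.sin_pi_div_two_sub u).symm
      rw [this]
      calc |Real.sin (Real.pi / 2 - u)| ≤ |Real.pi / 2 - u| := Real.abs_sin_le_abs
        _ ≤ 1 / 2 := by
            rw [abs_le]
            constructor <;> [skip; skip] <;>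
              · have h1 := hu.1; have h2 := hu.2
                rw [ha_def] at h1; rw [hb_def] at h2; linarith
    rw [abs_mul, abs_of_pos hr0]
    nlinarith [abs_nonneg (Real.cos u)]
  -- v₁ is strictly increasing on [a, b]
  have hvc : Continuous v₁ := continuous_iff_continuousAt.mpr fun t => (hv₁ t).continuousAt
  have hxc : Continuous x₁ := continuous_iff_continuousAt.mpr fun t => (hx₁ t).continuousAt
  have hv1strict : StrictMonoOn v₁ (Icc a b) := by
    apply strictMonoOn_of_deriv_pos (convex_Icc _ _) hvc.continuousOn
    intro u hu
    rw [interior_Icc] at hu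
    rw [(hv₁ u).deriv]
    have hu' : u ∈ Icc a b := ⟨hu.1.le, hu.2.le⟩
    have hx1u : 1 ≤ x₁ u := (h1 u ⟨le_trans ha0 hu.1.le, le_trans hu.2.le hbpi⟩).1
    exact mul_pos (hFpos u hu') (by linarith)
  have hvb : 0 < v₁ b := by
    have hmem_a : a ∈ Icc a b := left_mem_Icc.mpr hab.le
    have hmem_b : b ∈ Icc a b := right_mem_Icc.mpr hab.le
    have hva : 0 ≤ v₁ a := (h1 a ⟨ha0, by linarith⟩).2
    have := hv1strict hmem_a hmem_b hab
    linarith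
  -- x₁ strictly increasing on [b, π]
  have hbltpi : b < Real.pi := by rw [hb_def]; linarith
  have hx1strict : StrictMonoOn x₁ (Icc b Real.pi) := by
    apply strictMonoOn_of_deriv_pos (convex_Icc _ _) hxc.continuousOn
    intro u hu
    rw [interior_Icc] at hu
    rw [(hx₁ u).deriv]
    have hub : b ≤ u := hu.1.le
    have hupi : u ≤ Real.pi := hu.2.le
    have hmono := hv1mono ⟨by linarith, hbpi⟩ ⟨by linarith, hupi⟩ hub
    linarith
  have hx1b : 1 ≤ x₁ b := (h1 b ⟨by linarith, hbpi⟩).1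
  have hx1pi : 1 < x₁ Real.pi := by
    have := hx1strict (left_mem_Icc.mpr hbltpi.le) (right_mem_Icc.mpr hbltpi.le) hbltpi
    linarith
  have hv2pi : 1 ≤ v₂ Real.pi := (h2 Real.pi (right_mem_Icc.mpr hpi0)).2
  have htr : 2 < x₁ Real.pi + v₂ Real.pi := by linarith
  refine ⟨htr, ?_, ?_, ?_⟩
  all_goals
    set τ := x₁ Real.pi + v₂ Real.pi with hτ
    have hD : 0 < τ ^ 2 - 4 := by nlinarith
    have hsqrt_pos : 0 < Real.sqrt (τ ^ 2 - 4) := Real.sqrt_pos.mpr hD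
    have hsqrt_lt : Real.sqrt (τ ^ 2 - 4) < τ := by
      have h1' : Real.sqrt (τ ^ 2 - 4) < Real.sqrt (τ ^ 2) :=
        Real.sqrt_lt_sqrt (by linarith) (by linarith)
      rwa [Real.sqrt_sq (by linarith : (0:ℝ) ≤ τ)] at h1'
    first
    | linarith
    | linarith
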